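/- Let T be a tree with q edges (hence p = q+1 vertices) and bipartition (X, Y) with |X| = s, admitting a set-ordered graceful labeling f. Then the set of vertex labels on X is exactly {0, 1, ..., s−1} and the set of vertex labels on Y is exactly {s, s+1, ..., q}. -/

import Mathlib

/-- `(X, Y)` is a bipartition of the graph `G`. -/
def IsBipartitionOf {V : Type*} (G : SimpleGraph V) (X Y : Set V) : Prop :=
  X ∪ Y = Set.univ ∧ Disjoint X Y ∧
    ∀ u v, G.Adj u v → (u ∈ X ∧ v ∈ Y) ∨ (u ∈ Y ∧ v ∈ X)

/-- `f` is a set-ordered graceful labeling of the graph `G` with `q` edges and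
bipartition `(X, Y)`: `f` is injective into `{0,…,q}`, the induced edge labels
`|f u − f v|` form exactly `{1,…,q}`, and every label on `X` is smaller than every
label on `Y`. -/
def IsSetOrderedGraceful {V : Type*} (G : SimpleGraph V) (q : ℕ) (X Y : Set V)
    (f : V → ℕ) : Prop :=
  Function.Injective f ∧ (∀ v, f v ≤ q) ∧
    {n : ℕ | ∃ u v, G.Adj u v ∧ Nat.dist (f u) (f v) = n} = Set.Icc 1 q ∧
    ∀ x ∈ X, ∀ y ∈ Y, f x < f y

/-- for a tree `T` with `q` edges, bipartition `(X,Y)` with `|X| = s`, and a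
set-ordered graceful labeling `f`, the labels on `X` are exactly `{0,…,s-1}` and the
labels on `Y` are exactly `{s,…,q}`. -/
theorem setOrderedGraceful_vertex_labels {V : Type*} [Fintype V]
    (T : SimpleGraph V) (hT : T.IsTree) (q : ℕ) (hq : T.edgeSet.ncard = q)
    (X Y : Set V) (hXY : IsBipartitionOf T X Y)
    (f : V → ℕ) (hf : IsSetOrderedGraceful T q X Y f) :
    f '' X = Set.Iio X.ncard ∧ f '' Y = Set.Icc X.ncard q := by

  classical
  obtain ⟨hinj, hle, -, hord⟩ := hf
  obtain ⟨hunion, hdisj, -⟩ := hXY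
  haveI : Nonempty V := hT.isConnected.nonempty
  haveI : Fintype T.edgeSet := Fintype.ofFinite _
  -- card V = q + 1
  have hE : T.edgeFinset.card = q := by
    rw [← hq, Set.ncard_eq_toFinset_card']
    unfold SimpleGraph.edgeFinset; convert rfl
  have hcardV : Fintype.card V = q + 1 := by
    have h1 := hT.card_edgeFinset
    have h2 : 1 ≤ Fintype.card V := Fintype.card_pos
    omega
  -- range of f is Iic q
  have hfin : ∀ A : Set V, (f '' A).Finite := fun A => A.toFinite.image f
  have hIic : (Set.Iic q).ncard = q + 1 := by
    rw [← Nat.card_coe_set_eq, Nat.card_eq_fintype_card]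
    simp
  have hrange : f '' Set.univ = Set.Iic q := by
    apply Set.eq_of_subset_of_ncard_le
    · rintro n ⟨v, -, rfl⟩; exact hle v
    · rw [hIic, Set.ncard_image_of_injective _ hinj, Set.ncard_univ,
        Nat.card_eq_fintype_card, hcardV]
    · exact Set.finite_Iic q
  set s := X.ncard with hs
  have hcardX : (f '' X).ncard = s := Set.ncard_image_of_injective _ hinj
  -- downward closedness of f '' X
  have hdc : ∀ a ∈ f '' X, ∀ b, b < a → b ∈ f '' X := by
    rintro a ⟨x, hx, rfl⟩ b hb
    have hbq : b ∈ Set.Iic q := le_trans hb.le (hle x)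
    rw [← hrange] at hbq
    obtain ⟨u, -, rfl⟩ := hbq
    have hu : u ∈ X ∪ Y := by rw [hunion]; trivial
    rcases hu with hu | hu
    · exact ⟨u, hu, rfl⟩
    · exact absurd (hord x hx u hu) (by omega)
  have hXsub : f '' X ⊆ Set.Iio s := by
    intro a ha
    by_contra hge
    simp only [Set.mem_Iio, not_lt] at hge
    have hsub : Set.Iic a ⊆ f '' X := by
      intro b hb
      rcases lt_or_eq_of_le (Set.mem_Iic.mp hb) with h | h
      · exact hdc a ha b h
      · rwa [h]
    have := Set.ncard_le_ncard hsub (hfin X)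
    rw [hcardX] at this
    have : (Set.Iic a).ncard = a + 1 := by
      rw [← Nat.card_coe_set_eq, Nat.card_eq_fintype_card]; simp
    omega
  have hXeq : f '' X = Set.Iio s := by
    apply Set.eq_of_subset_of_ncard_le hXsub _ (Set.finite_Iio s)
    rw [hcardX, ← Nat.card_coe_set_eq, Nat.card_eq_fintype_card]; simp
  refine ⟨hXeq, ?_⟩
  have hdisj' : Disjoint (f '' X) (f '' Y) := Set.disjoint_image_of_injective hinj hdisj
  have hcup : f '' X ∪ f '' Y = Set.Iic q := by
    rw [← Set.image_union, hunion, hrange]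
  ext n
  constructor
  · intro hn
    have hnq : n ∈ Set.Iic q := by rw [← hcup]; exact Or.inr hn
    have hns : n ∉ Set.Iio s := by
      rw [← hXeq]
      exact fun h => Set.disjoint_left.mp hdisj' h hn
    simp only [Set.mem_Iic] at hnq
    simp only [Set.mem_Iio, not_lt] at hns
    exact Set.mem_Icc.mpr ⟨hns, hnq⟩
  · intro hn
    rw [Set.mem_Icc] at hn
    have hnq : n ∈ f '' X ∪ f '' Y := by rw [hcup]; exact Set.mem_Iic.mpr hn.2
    rcases hnq with h | h
    · rw [hXeq] at h; simp only [Set.mem_Iio] at h; omega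
    · exact h
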